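/- arXiv:0705.4221 — 2 statements merged into one kernel-verified Lean document; each statement's English description precedes it below -/
import Mathlib

section
/- Let n be a positive integer, T > 0, let A : ℝ → Matrix (Fin n) (Fin n) ℝ be continuously differentiable on a neighborhood of 0 with derivative A'(0) at 0, let F : [0,T] → ℝⁿ be continuous, and let u₀ ∈ ℝⁿ. For each λ near 0 let u_λ : [0,T] → ℝⁿ be differentiable with u_λ'(t) = −A(λ) u_λ(t) + F(t) for all t ∈ [0,T] and u_λ(0) = u₀. Let v : [0,T] → ℝⁿ be differentiable with v'(t) = −A(0) v(t) − A'(0) (u_0(t)) and v(0) = 0. Then for every t ∈ [0,T], the map λ ↦ u_λ(t) is differentiable at λ = 0 with derivative v(t). -/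
open Set Filter Real

lemma mulVec_bound {n : ℕ} (M : Matrix (Fin n) (Fin n) ℝ) (x : Fin n → ℝ) {C : ℝ}
    (hC : 0 ≤ C) (h : ∀ i k, |M i k| ≤ C) : ‖M.mulVec x‖ ≤ n * C * ‖x‖ := by
  have hx : 0 ≤ ‖x‖ := norm_nonneg x
  rw [pi_norm_le_iff_of_nonneg (by positivity)]
  intro i
  rw [Real.norm_eq_abs]
  calc |M.mulVec x i| = |∑ k, M i k * x k| := by simp [Matrix.mulVec, dotProduct]
    _ ≤ ∑ k, |M i k * x k| := Finset.abs_sum_le_sum_abs _ _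
    _ ≤ ∑ _k : Fin n, C * ‖x‖ := by
        refine Finset.sum_le_sum fun k _ => ?_
        rw [abs_mul]
        have hxk : |x k| ≤ ‖x‖ := by
          have := norm_le_pi_norm x k; rwa [Real.norm_eq_abs] at this
        exact mul_le_mul (h i k) hxk (abs_nonneg _) hC
    _ = n * (C * ‖x‖) := by simp [Finset.sum_const, Finset.card_univ, mul_assoc]
    _ = n * C * ‖x‖ := by ring

set_option maxHeartbeats 1000000 in

set_option maxHeartbeats 1000000 in
/-- Gâteaux differentiability with respect to the parameter of the solution
of a linear parametric ODE `u_λ' = −A(λ) u_λ + F`, `u_λ(0) = u₀`: the derivative of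
`λ ↦ u_λ(t)` at `λ = 0` is the solution `v` of the linearized equation
`v' = −A(0) v − A'(0) u₀(·)`, `v(0) = 0`. -/
theorem stmt3 (n : ℕ) (hn : 0 < n) (T : ℝ) (hT : 0 < T)
    (A A' : ℝ → Matrix (Fin n) (Fin n) ℝ)
    (hA : ∀ᶠ lam in nhds (0 : ℝ), ∀ i k, HasDerivAt (fun l => A l i k) (A' lam i k) lam)
    (hA' : ∀ i k, ContinuousAt (fun lam => A' lam i k) 0)
    (F : ℝ → Fin n → ℝ) (hF : ContinuousOn F (Icc 0 T))
    (u₀ : Fin n → ℝ)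
    (u : ℝ → ℝ → Fin n → ℝ)
    (hu : ∀ᶠ lam in nhds (0 : ℝ),
      u lam 0 = u₀ ∧ ∀ t ∈ Icc (0 : ℝ) T,
        HasDerivWithinAt (u lam) (-(A lam).mulVec (u lam t) + F t) (Icc (0 : ℝ) T) t)
    (v : ℝ → Fin n → ℝ) (hv0 : v 0 = 0)
    (hv : ∀ t ∈ Icc (0 : ℝ) T,
      HasDerivWithinAt v (-(A 0).mulVec (v t) - (A' 0).mulVec (u 0 t)) (Icc (0 : ℝ) T) t) :
    ∀ t ∈ Icc (0 : ℝ) T, HasDerivAt (fun lam => u lam t) (v t) 0 := by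
  intro t ht
  obtain ⟨hu00, hu0d⟩ := hu.self_of_nhds
  have hA0 : ∀ i k, HasDerivAt (fun l => A l i k) (A' 0 i k) 0 := hA.self_of_nhds
  have hu0c : ContinuousOn (u 0) (Icc 0 T) := fun s hs => (hu0d s hs).continuousWithinAt
  have hvc : ContinuousOn v (Icc 0 T) := fun s hs => (hv s hs).continuousWithinAt
  -- uniform bound M on ‖u 0 s‖ and ‖v s‖
  obtain ⟨M₁, hM₁⟩ := isCompact_Icc.exists_bound_of_continuousOn hu0c
  obtain ⟨M₂, hM₂⟩ := isCompact_Icc.exists_bound_of_continuousOn hvc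
  set M : ℝ := max M₁ M₂ ⊔ 0 with hMdef
  have hM0 : 0 ≤ M := le_max_right _ _
  have hMu : ∀ s ∈ Icc (0:ℝ) T, ‖u 0 s‖ ≤ M :=
    fun s hs => (hM₁ s hs).trans ((le_max_left _ _).trans (le_max_left _ _))
  have hMv : ∀ s ∈ Icc (0:ℝ) T, ‖v s‖ ≤ M :=
    fun s hs => (hM₂ s hs).trans ((le_max_right _ _).trans (le_max_left _ _))
  -- bound on entries of A 0
  set B : ℝ := ∑ i : Fin n, ∑ k : Fin n, |A 0 i k| with hBdef
  have hB0 : 0 ≤ B := Finset.sum_nonneg fun i _ => Finset.sum_nonneg fun k _ => abs_nonneg _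
  have hBent : ∀ i k, |A 0 i k| ≤ B := by
    intro i k
    calc |A 0 i k| ≤ ∑ k', |A 0 i k'| :=
          Finset.single_le_sum (f := fun k' => |A 0 i k'|)
            (fun k' _ => abs_nonneg _) (Finset.mem_univ k)
      _ ≤ B := Finset.single_le_sum (f := fun i' => ∑ k', |A 0 i' k'|)
          (fun i' _ => Finset.sum_nonneg fun k' _ => abs_nonneg _) (Finset.mem_univ i)
  set K : ℝ := n * (B + 1) with hKdef
  have hK0 : 0 < K := by positivity
  rw [hasDerivAt_iff_isLittleO, Asymptotics.isLittleO_iff]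
  intro c hc
  set ε : ℝ := c * K / (2 * n * (M + 1) * exp (K * T)) with hεdef
  have hε0 : 0 < ε := by positivity
  -- eventual bounds on entries
  have h1 : ∀ᶠ lam in nhds (0:ℝ), ∀ i k,
      |A lam i k - A 0 i k - lam * A' 0 i k| ≤ ε * |lam| := by
    refine eventually_all.2 fun i => eventually_all.2 fun k => ?_
    have := (Asymptotics.isLittleO_iff.mp (hasDerivAt_iff_isLittleO.mp (hA0 i k))) hε0
    filter_upwards [this] with lam h
    simpa [Real.norm_eq_abs, smul_eq_mul] using h
  have h2 : ∀ᶠ lam in nhds (0:ℝ), ∀ i k, |A lam i k - A 0 i k| ≤ ε := by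
    refine eventually_all.2 fun i => eventually_all.2 fun k => ?_
    have := Metric.tendsto_nhds.mp (hA0 i k).continuousAt ε hε0
    filter_upwards [this] with lam h
    rw [Real.dist_eq] at h; exact h.le
  have h3 : ∀ᶠ lam in nhds (0:ℝ), ∀ i k, |A lam i k| ≤ B + 1 := by
    refine eventually_all.2 fun i => eventually_all.2 fun k => ?_
    have := Metric.tendsto_nhds.mp (hA0 i k).continuousAt 1 one_pos
    filter_upwards [this] with lam h
    rw [Real.dist_eq] at h
    calc |A lam i k| ≤ |A lam i k - A 0 i k| + |A 0 i k| := by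
          simpa using abs_add_le (A lam i k - A 0 i k) (A 0 i k)
      _ ≤ B + 1 := by have := hBent i k; linarith
  filter_upwards [hu, h1, h2, h3] with lam hul h1l h2l h3l
  simp only [sub_zero]
  -- the difference function and its derivative
  set w : ℝ → Fin n → ℝ := fun s => u lam s - u 0 s - lam • v s with hwdef
  set d : ℝ → Fin n → ℝ := fun s =>
    (-(A lam).mulVec (u lam s) + F s) - (-(A 0).mulVec (u 0 s) + F s)
      - lam • (-(A 0).mulVec (v s) - (A' 0).mulVec (u 0 s)) with hddef
  have hwd : ∀ s ∈ Icc (0:ℝ) T, HasDerivWithinAt w (d s) (Icc 0 T) s :=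
    fun s hs => ((hul.2 s hs).sub (hu0d s hs)).sub ((hv s hs).const_smul lam)
  have hwc : ContinuousOn w (Icc 0 T) := fun s hs => (hwd s hs).continuousWithinAt
  have hwIci : ∀ s ∈ Ico (0:ℝ) T, HasDerivWithinAt w (d s) (Ici s) s :=
    fun s hs => (hwd s ⟨hs.1, hs.2.le⟩).mono_of_mem_nhdsWithin (Icc_mem_nhdsGE_of_mem hs)
  have hw0 : ‖w 0‖ ≤ 0 := by
    simp [hwdef, hul.1, hu00, hv0]
  set δ : ℝ := 2 * n * M * ε * |lam| with hδdef
  -- algebraic identity for d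
  have hdid : ∀ s, d s = -(A lam).mulVec (w s)
      - ((A lam - A 0 - lam • A' 0).mulVec (u 0 s))
      - lam • ((A lam - A 0).mulVec (v s)) := by
    intro s
    simp only [hddef, hwdef, Matrix.sub_mulVec, Matrix.mulVec_sub, Matrix.smul_mulVec,
      Matrix.mulVec_smul, Matrix.neg_mulVec]
    module
  have hbound : ∀ s ∈ Ico (0:ℝ) T, ‖d s‖ ≤ K * ‖w s‖ + δ := by
    intro s hs
    have hs' : s ∈ Icc (0:ℝ) T := ⟨hs.1, hs.2.le⟩
    rw [hdid s]
    have b1 : ‖(A lam).mulVec (w s)‖ ≤ n * (B + 1) * ‖w s‖ :=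
      mulVec_bound _ _ (by linarith) h3l
    have b2 : ‖(A lam - A 0 - lam • A' 0).mulVec (u 0 s)‖ ≤ n * (ε * |lam|) * M := by
      refine le_trans (mulVec_bound (C := ε * |lam|) _ _ (by positivity) ?_) ?_
      · intro i k
        simpa [Matrix.sub_apply, Matrix.smul_apply, smul_eq_mul] using h1l i k
      · have := hMu s hs'
        have h0 : (0:ℝ) ≤ n * (ε * |lam|) := by positivity
        exact mul_le_mul_of_nonneg_left this h0
    have b3 : ‖(A lam - A 0).mulVec (v s)‖ ≤ n * ε * M := by
      refine le_trans (mulVec_bound (C := ε) _ _ hε0.le ?_) ?_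
      · intro i k; simpa [Matrix.sub_apply] using h2l i k
      · exact mul_le_mul_of_nonneg_left (hMv s hs') (by positivity)
    calc ‖-(A lam).mulVec (w s) - (A lam - A 0 - lam • A' 0).mulVec (u 0 s)
          - lam • ((A lam - A 0).mulVec (v s))‖
        ≤ ‖-(A lam).mulVec (w s) - (A lam - A 0 - lam • A' 0).mulVec (u 0 s)‖
          + ‖lam • ((A lam - A 0).mulVec (v s))‖ := norm_sub_le _ _
      _ ≤ ‖-(A lam).mulVec (w s)‖ + ‖(A lam - A 0 - lam • A' 0).mulVec (u 0 s)‖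
          + ‖lam • ((A lam - A 0).mulVec (v s))‖ := by
          gcongr; exact norm_sub_le _ _
      _ = ‖(A lam).mulVec (w s)‖ + ‖(A lam - A 0 - lam • A' 0).mulVec (u 0 s)‖
          + |lam| * ‖(A lam - A 0).mulVec (v s)‖ := by
          rw [norm_neg, norm_smul, Real.norm_eq_abs]
      _ ≤ n * (B + 1) * ‖w s‖ + n * (ε * |lam|) * M + |lam| * (n * ε * M) := by
          have := mul_le_mul_of_nonneg_left b3 (abs_nonneg lam)
          gcongr
      _ = K * ‖w s‖ + δ := by rw [hKdef, hδdef]; ring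
  have hgron := norm_le_gronwallBound_of_norm_deriv_right_le hwc hwIci hw0 hbound t ht
  have hgb : gronwallBound 0 K δ (t - 0) = δ / K * (exp (K * t) - 1) := by
    rw [gronwallBound_of_K_ne_0 hK0.ne']
    simp
  rw [hgb] at hgron
  -- final estimate
  have hexp : exp (K * t) - 1 ≤ exp (K * T) := by
    have : exp (K * t) ≤ exp (K * T) := exp_le_exp.2 (by nlinarith [ht.2])
    linarith
  have hδ0 : 0 ≤ δ / K := by positivity
  have hfin : δ / K * exp (K * T) ≤ c * |lam| := by
    rw [div_mul_eq_mul_div, div_le_iff₀ hK0]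
    have he : ε * (2 * n * (M + 1) * exp (K * T)) = c * K := by
      rw [hεdef]; field_simp
    nlinarith [abs_nonneg lam, hε0.le, exp_pos (K * T), hM0,
      mul_nonneg (mul_nonneg (mul_nonneg (by positivity : (0:ℝ) ≤ 2 * (n:ℝ)) hε0.le)
        (exp_pos (K * T)).le) (abs_nonneg lam)]
  calc ‖u lam t - u 0 t - lam • v t‖ = ‖w t‖ := rfl
    _ ≤ δ / K * (exp (K * t) - 1) := hgron
    _ ≤ δ / K * exp (K * T) := mul_le_mul_of_nonneg_left hexp hδ0
    _ ≤ c * |lam| := hfin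
    _ = c * ‖lam‖ := by rw [Real.norm_eq_abs]
end

section
/- Let T > 0, let F assign continuously to each t ∈ [0,T] real values F(t)(i,j) at interior points, and let u₀ be a grid function vanishing on the boundary. For each continuous λ : [0,T] → ℝ^{N−1} with sup_{t,j} |λ_j(t)| < 1/2, let u_λ : [0,T] → (grid functions vanishing on the boundary) be the unique C¹ solution of ∂_t u_λ(t)(i,j) + (A(λ(t)) u_λ(t))(i,j) = F(t)(i,j) at interior points with u_λ(0) = u₀. Then the map Λ_h : λ ↦ u_λ(T), from the open ball of radius 1/2 in the space C([0,T], ℝ^{N−1}) with the supremum norm to the (finite-dimensional) space of interior grid values, is Fréchet differentiable at 0. -/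
open Set
open scoped Interval

/-- The point `(i,j)` is an interior node of the grid `Ω_h`. -/
def isInterior (M N : ℤ) (i j : ℤ) : Prop :=
  1 ≤ i ∧ i ≤ M - 1 ∧ 1 ≤ j ∧ j ≤ N - 1

/-- The point `(i,j)` belongs to the grid `Ω_h`. -/
def onGrid (M N : ℤ) (i j : ℤ) : Prop :=
  0 ≤ i ∧ i ≤ M ∧ 0 ≤ j ∧ j ≤ N

/-- The point `(i,j)` belongs to the discrete boundary `Γ⁰` of `Ω_h`. -/
def onBoundary (M N : ℤ) (i j : ℤ) : Prop :=
  onGrid M N i j ∧ ¬ isInterior M N i j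

/-- The discrete Dirichlet Laplacian `(A X)(i,j)`. -/
noncomputable def discLap (h : ℝ) (X : ℤ → ℤ → ℝ) (i j : ℤ) : ℝ :=
  (1 / h ^ 2) * (4 * X i j - X (i + 1) j - X (i - 1) j - X i (j + 1) - X i (j - 1))

/-- The perturbed operator `A(λ)`. -/
noncomputable def pertOp (h : ℝ) (lam : ℤ → ℝ) (X : ℤ → ℤ → ℝ) (i j : ℤ) : ℝ :=
  if i = 1 then
    (1 / h ^ 2) * (2 * (1 + 1 / (1 + lam j)) * X 1 j - (2 / (2 + lam j)) * X 2 j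
      - X 1 (j + 1) - X 1 (j - 1))
  else discLap h X i j

/-- Reindex a vector of `ℝ^{N−1}` (entries `v 0, …, v (N-2)` corresponding to
`λ_1, …, λ_{N−1}`) as a `ℤ`-indexed family, vanishing outside `1 ≤ j ≤ N−1`. -/
noncomputable def lamOfFin (N : ℕ) (v : Fin (N - 1) → ℝ) : ℤ → ℝ := fun j =>
  if hj : 0 ≤ j - 1 ∧ (j - 1).toNat < N - 1 then v ⟨(j - 1).toNat, hj.2⟩ else 0

/-! ### Auxiliary definitions -/


/-- Extend interior grid values by zero. -/
noncomputable def extGrid (M N : ℕ) (x : Fin (M-1) × Fin (N-1) → ℝ) : ℤ → ℤ → ℝ := fun i j =>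
  if hij : 1 ≤ i ∧ i ≤ (M:ℤ) - 1 ∧ 1 ≤ j ∧ j ≤ (N:ℤ) - 1 then
    x (⟨(i-1).toNat, by omega⟩, ⟨(j-1).toNat, by omega⟩) else 0

lemma extGrid_mk (M N : ℕ) (x : Fin (M-1) × Fin (N-1) → ℝ) (p : Fin (M-1) × Fin (N-1)) :
    extGrid M N x (((p.1 : ℕ) : ℤ) + 1) (((p.2 : ℕ) : ℤ) + 1) = x p := by
  have h1 := p.1.isLt
  have h2 := p.2.isLt
  rw [extGrid, dif_pos (by omega)]
  congr 1
  ext <;> simp <;> omega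

lemma abs_extGrid_le (M N : ℕ) (x : Fin (M-1) × Fin (N-1) → ℝ) (i j : ℤ) :
    |extGrid M N x i j| ≤ ‖x‖ := by
  rw [extGrid]
  split
  · exact (Real.norm_eq_abs _) ▸ norm_le_pi_norm x _
  · simpa using norm_nonneg x

lemma extGrid_sub (M N : ℕ) (x y : Fin (M-1) × Fin (N-1) → ℝ) (i j : ℤ) :
    extGrid M N (x - y) i j = extGrid M N x i j - extGrid M N y i j := by
  rw [extGrid, extGrid, extGrid]; split <;> simp

lemma extGrid_add (M N : ℕ) (x y : Fin (M-1) × Fin (N-1) → ℝ) (i j : ℤ) :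
    extGrid M N (x + y) i j = extGrid M N x i j + extGrid M N y i j := by
  rw [extGrid, extGrid, extGrid]; split <;> simp

lemma extGrid_smul (M N : ℕ) (c : ℝ) (x : Fin (M-1) × Fin (N-1) → ℝ) (i j : ℤ) :
    extGrid M N (c • x) i j = c * extGrid M N x i j := by
  rw [extGrid, extGrid]; split <;> simp

lemma abs_lamOfFin_le (N : ℕ) (w : Fin (N-1) → ℝ) (j : ℤ) : |lamOfFin N w j| ≤ ‖w‖ := by
  rw [lamOfFin]
  split
  · exact (Real.norm_eq_abs _) ▸ norm_le_pi_norm w _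
  · simpa using norm_nonneg w

lemma lamOfFin_coe (N : ℕ) (w : Fin (N-1) → ℝ) (j : Fin (N-1)) :
    lamOfFin N w (((j : ℕ) : ℤ) + 1) = w j := by
  have := j.isLt
  rw [lamOfFin, dif_pos (by omega)]
  congr 1
  ext
  simp

lemma lamOfFin_zero (N : ℕ) (j : ℤ) : lamOfFin N (0 : Fin (N-1) → ℝ) j = 0 := by
  rw [lamOfFin]; split <;> simp

/-- The operator `A(λ)` acting on interior-values vectors. -/
noncomputable def Bfun (M N : ℕ) (h : ℝ) (w : Fin (N-1) → ℝ)
    (x : Fin (M-1) × Fin (N-1) → ℝ) : Fin (M-1) × Fin (N-1) → ℝ := fun p =>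
  pertOp h (lamOfFin N w) (extGrid M N x) (((p.1 : ℕ) : ℤ) + 1) (((p.2 : ℕ) : ℤ) + 1)

/-- The derivative of `w ↦ Bfun w x` at `w = 0`. -/
noncomputable def Cfun (M N : ℕ) (h : ℝ) (w : Fin (N-1) → ℝ)
    (x : Fin (M-1) × Fin (N-1) → ℝ) : Fin (M-1) × Fin (N-1) → ℝ := fun p =>
  if ((p.1 : ℕ) : ℤ) + 1 = 1 then
    (1 / h ^ 2) * (-(2 * w p.2) * extGrid M N x 1 (((p.2 : ℕ) : ℤ) + 1)
      + (w p.2 / 2) * extGrid M N x 2 (((p.2 : ℕ) : ℤ) + 1))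
  else 0

lemma ext_restrict (M N : ℕ) (v : ℤ → ℤ → ℝ)
    (hv : ∀ i j, onBoundary M N i j → v i j = 0) (a b : ℤ) (hg : onGrid M N a b) :
    extGrid M N (fun q => v (((q.1 : ℕ) : ℤ) + 1) (((q.2 : ℕ) : ℤ) + 1)) a b = v a b := by
  rw [extGrid]
  split_ifs with hij
  · congr 1 <;> simp only [] <;> omega
  · exact (hv a b ⟨hg, fun hi => hij ⟨hi.1, hi.2.1, hi.2.2.1, hi.2.2.2⟩⟩).symm

lemma pertOp_eq_Bfun (M N : ℕ) (hM : 3 ≤ M) (hN : 3 ≤ N) (h : ℝ) (w : Fin (N-1) → ℝ)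
    (v : ℤ → ℤ → ℝ) (hv : ∀ i j, onBoundary M N i j → v i j = 0)
    (p : Fin (M-1) × Fin (N-1)) :
    pertOp h (lamOfFin N w) v (((p.1 : ℕ) : ℤ) + 1) (((p.2 : ℕ) : ℤ) + 1)
      = Bfun M N h w (fun q => v (((q.1 : ℕ) : ℤ) + 1) (((q.2 : ℕ) : ℤ) + 1)) p := by
  have h1 := p.1.isLt
  have h2 := p.2.isLt
  rw [Bfun, pertOp, pertOp]
  set j : ℤ := ((p.2 : ℕ) : ℤ) + 1 with hj
  split_ifs with hi
  · rw [ext_restrict M N v hv 1 j (by constructor <;> omega),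
      ext_restrict M N v hv 2 j (by refine ⟨by omega, by omega, by omega, by omega⟩),
      ext_restrict M N v hv 1 (j+1) (by refine ⟨by omega, by omega, by omega, by omega⟩),
      ext_restrict M N v hv 1 (j-1) (by refine ⟨by omega, by omega, by omega, by omega⟩)]
  · set i : ℤ := ((p.1 : ℕ) : ℤ) + 1 with hi'
    rw [discLap, discLap,
      ext_restrict M N v hv i j (by refine ⟨by omega, by omega, by omega, by omega⟩),
      ext_restrict M N v hv (i+1) j (by refine ⟨by omega, by omega, by omega, by omega⟩),
      ext_restrict M N v hv (i-1) j (by refine ⟨by omega, by omega, by omega, by omega⟩),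
      ext_restrict M N v hv i (j+1) (by refine ⟨by omega, by omega, by omega, by omega⟩),
      ext_restrict M N v hv i (j-1) (by refine ⟨by omega, by omega, by omega, by omega⟩)]

lemma Bfun_sub (M N : ℕ) (h : ℝ) (w : Fin (N-1) → ℝ) (x y : Fin (M-1) × Fin (N-1) → ℝ) :
    Bfun M N h w (x - y) = Bfun M N h w x - Bfun M N h w y := by
  funext p
  simp only [Bfun, pertOp, discLap, extGrid_sub, Pi.sub_apply]
  split_ifs <;> ring

lemma Bfun_add (M N : ℕ) (h : ℝ) (w : Fin (N-1) → ℝ) (x y : Fin (M-1) × Fin (N-1) → ℝ) :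
    Bfun M N h w (x + y) = Bfun M N h w x + Bfun M N h w y := by
  funext p
  simp only [Bfun, pertOp, discLap, extGrid_add, Pi.add_apply]
  split_ifs <;> ring

lemma Bfun_smul (M N : ℕ) (h : ℝ) (w : Fin (N-1) → ℝ) (c : ℝ) (x : Fin (M-1) × Fin (N-1) → ℝ) :
    Bfun M N h w (c • x) = c • Bfun M N h w x := by
  funext p
  simp only [Bfun, pertOp, discLap, extGrid_smul, Pi.smul_apply, smul_eq_mul]
  split_ifs <;> ring

lemma Cfun_sub (M N : ℕ) (h : ℝ) (w : Fin (N-1) → ℝ) (x y : Fin (M-1) × Fin (N-1) → ℝ) :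
    Cfun M N h w (x - y) = Cfun M N h w x - Cfun M N h w y := by
  funext p
  simp only [Cfun, extGrid_sub, Pi.sub_apply]
  split_ifs <;> ring

lemma Cfun_add_w (M N : ℕ) (h : ℝ) (w w' : Fin (N-1) → ℝ) (x : Fin (M-1) × Fin (N-1) → ℝ) :
    Cfun M N h (w + w') x = Cfun M N h w x + Cfun M N h w' x := by
  funext p
  simp only [Cfun, Pi.add_apply]
  split_ifs <;> ring

lemma Cfun_smul_w (M N : ℕ) (h : ℝ) (c : ℝ) (w : Fin (N-1) → ℝ) (x : Fin (M-1) × Fin (N-1) → ℝ) :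
    Cfun M N h (c • w) x = c • Cfun M N h w x := by
  funext p
  simp only [Cfun, Pi.smul_apply, smul_eq_mul]
  split_ifs <;> ring

lemma abs_mul_le' {c x K m : ℝ} (hc : |c| ≤ K) (hx : |x| ≤ m) : |c * x| ≤ K * m := by
  rw [abs_mul]; exact mul_le_mul hc hx (abs_nonneg _) (le_trans (abs_nonneg _) hc)

lemma coeff6 {a : ℝ} (ha : |a| ≤ 1/2) : |2*(1+1/(1+a))| ≤ 6 := by
  obtain ⟨hl, hr⟩ := abs_le.1 ha
  have h1 : (0:ℝ) < 1 + a := by linarith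
  have h2 : 1/(1+a) ≤ 2 := by rw [div_le_iff₀ h1]; linarith
  have h3 : 0 < 1/(1+a) := by positivity
  rw [abs_of_pos (by linarith)]; linarith

lemma coeff2 {a : ℝ} (ha : |a| ≤ 1/2) : |2/(2+a)| ≤ 2 := by
  obtain ⟨hl, hr⟩ := abs_le.1 ha
  have h1 : (0:ℝ) < 2 + a := by linarith
  have h2 : 2/(2+a) ≤ 2 := by rw [div_le_iff₀ h1]; linarith
  have h3 : 0 < 2/(2+a) := by positivity
  rw [abs_of_pos h3]; linarith

lemma coeff_lip1 {a : ℝ} (ha : |a| ≤ 1/2) : |2*(1+1/(1+a)) - 4| ≤ 4*|a| := by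
  obtain ⟨hl, hr⟩ := abs_le.1 ha
  have h1 : (0:ℝ) < 1 + a := by linarith
  have e : 2*(1+1/(1+a)) - 4 = ((-2)*a)/(1+a) := by field_simp; ring
  rw [e, abs_div, abs_of_pos h1, div_le_iff₀ h1, abs_mul]
  rw [show |(-2:ℝ)| = 2 by norm_num]
  nlinarith [abs_nonneg a, mul_nonneg (abs_nonneg a) (by linarith : (0:ℝ) ≤ 2 + 4*a)]

lemma coeff_lip2 {a : ℝ} (ha : |a| ≤ 1/2) : |2/(2+a) - 1| ≤ |a| := by
  obtain ⟨hl, hr⟩ := abs_le.1 ha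
  have h1 : (0:ℝ) < 2 + a := by linarith
  have e : 2/(2+a) - 1 = (-a)/(2+a) := by field_simp; ring
  rw [e, abs_div, abs_of_pos h1, div_le_iff₀ h1, abs_neg]
  nlinarith [abs_nonneg a, mul_nonneg (abs_nonneg a) (by linarith : (0:ℝ) ≤ 1 + a)]

lemma coeff_q1 {a : ℝ} (ha : |a| ≤ 1/2) : |2*(1+1/(1+a)) - 4 + 2*a| ≤ 4*a^2 := by
  obtain ⟨hl, hr⟩ := abs_le.1 ha
  have h1 : (0:ℝ) < 1 + a := by linarith
  have e : 2*(1+1/(1+a)) - 4 + 2*a = (2*a^2)/(1+a) := by field_simp; ring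
  rw [e, abs_div, abs_of_pos h1, div_le_iff₀ h1, abs_of_nonneg (by positivity : (0:ℝ) ≤ 2*a^2)]
  nlinarith [sq_nonneg a, mul_nonneg (sq_nonneg a) (by linarith : (0:ℝ) ≤ 2 + 4*a)]

lemma coeff_q2 {a : ℝ} (ha : |a| ≤ 1/2) : |2/(2+a) - 1 + a/2| ≤ a^2 := by
  obtain ⟨hl, hr⟩ := abs_le.1 ha
  have h1 : (0:ℝ) < 2 + a := by linarith
  have h2 : (0:ℝ) < 2*(2+a) := by linarith
  have e : 2/(2+a) - 1 + a/2 = a^2/(2*(2+a)) := by field_simp; ring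
  rw [e, abs_div, abs_of_pos h2, div_le_iff₀ h2, abs_of_nonneg (sq_nonneg a)]
  nlinarith [sq_nonneg a, mul_nonneg (sq_nonneg a) (by linarith : (0:ℝ) ≤ 3 + 2*a)]

section Estimates

variable {M N : ℕ} {h : ℝ}

lemma norm_Bfun_le (hh : 0 < h) {w : Fin (N-1) → ℝ} (hw : ‖w‖ ≤ 1/2)
    (x : Fin (M-1) × Fin (N-1) → ℝ) : ‖Bfun M N h w x‖ ≤ 12/h^2 * ‖x‖ := by
  have hx0 : (0:ℝ) ≤ ‖x‖ := norm_nonneg x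
  have hh2 : (0:ℝ) < h^2 := by positivity
  rw [pi_norm_le_iff_of_nonneg (by positivity)]
  intro p
  rw [Real.norm_eq_abs, Bfun, pertOp]
  split_ifs with hi
  · set a := lamOfFin N w (((p.2:ℕ):ℤ)+1) with hadef
    have ha : |a| ≤ 1/2 := le_trans (abs_lamOfFin_le ..) hw
    have e1 := abs_mul_le' (coeff6 ha) (abs_extGrid_le M N x 1 (((p.2:ℕ):ℤ)+1))
    have e2 := abs_mul_le' (coeff2 ha) (abs_extGrid_le M N x 2 (((p.2:ℕ):ℤ)+1))
    have e3 := abs_extGrid_le M N x 1 ((((p.2:ℕ):ℤ)+1)+1)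
    have e4 := abs_extGrid_le M N x 1 ((((p.2:ℕ):ℤ)+1)-1)
    rw [abs_mul, abs_of_pos (by positivity : (0:ℝ) < 1/h^2)]
    have hE : |2*(1+1/(1+a)) * extGrid M N x 1 (((p.2:ℕ):ℤ)+1)
        - 2/(2+a) * extGrid M N x 2 (((p.2:ℕ):ℤ)+1)
        - extGrid M N x 1 ((((p.2:ℕ):ℤ)+1)+1) - extGrid M N x 1 ((((p.2:ℕ):ℤ)+1)-1)|
        ≤ 10 * ‖x‖ := by
      obtain ⟨a1, a2⟩ := abs_le.1 e1
      obtain ⟨b1, b2⟩ := abs_le.1 e2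
      obtain ⟨c1, c2⟩ := abs_le.1 (abs_le.2 ⟨neg_le_of_abs_le e3, le_of_abs_le e3⟩)
      obtain ⟨d1, d2⟩ := abs_le.1 (abs_le.2 ⟨neg_le_of_abs_le e4, le_of_abs_le e4⟩)
      rw [abs_le]; constructor <;> linarith
    calc 1/h^2 * |_| ≤ 1/h^2 * (10 * ‖x‖) := by
            exact mul_le_mul_of_nonneg_left hE (by positivity)
      _ ≤ 12/h^2 * ‖x‖ := by
            rw [div_mul_eq_mul_div, div_mul_eq_mul_div, div_le_div_iff₀ hh2 hh2]
            nlinarith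
  · rw [discLap, abs_mul, abs_of_pos (by positivity : (0:ℝ) < 1/h^2)]
    set i : ℤ := ((p.1:ℕ):ℤ)+1
    set j : ℤ := ((p.2:ℕ):ℤ)+1
    have e0 := abs_mul_le' (show |(4:ℝ)| ≤ 4 by norm_num) (abs_extGrid_le M N x i j)
    have e1 := abs_extGrid_le M N x (i+1) j
    have e2 := abs_extGrid_le M N x (i-1) j
    have e3 := abs_extGrid_le M N x i (j+1)
    have e4 := abs_extGrid_le M N x i (j-1)
    have hE : |4 * extGrid M N x i j - extGrid M N x (i+1) j - extGrid M N x (i-1) j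
        - extGrid M N x i (j+1) - extGrid M N x i (j-1)| ≤ 8 * ‖x‖ := by
      obtain ⟨a1, a2⟩ := abs_le.1 e0
      obtain ⟨b1, b2⟩ := abs_le.1 e1
      obtain ⟨c1, c2⟩ := abs_le.1 e2
      obtain ⟨d1, d2⟩ := abs_le.1 e3
      obtain ⟨f1, f2⟩ := abs_le.1 e4
      rw [abs_le]; constructor <;> linarith
    calc 1/h^2 * |_| ≤ 1/h^2 * (8 * ‖x‖) := mul_le_mul_of_nonneg_left hE (by positivity)
      _ ≤ 12/h^2 * ‖x‖ := by
            rw [div_mul_eq_mul_div, div_mul_eq_mul_div, div_le_div_iff₀ hh2 hh2]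
            nlinarith

end Estimates
section Estimates2

variable {M N : ℕ} {h : ℝ}

lemma norm_Bfun_diff_le (hh : 0 < h) {w : Fin (N-1) → ℝ} (hw : ‖w‖ ≤ 1/2)
    (x : Fin (M-1) × Fin (N-1) → ℝ) :
    ‖Bfun M N h w x - Bfun M N h 0 x‖ ≤ 5/h^2 * (‖w‖ * ‖x‖) := by
  have hx0 : (0:ℝ) ≤ ‖x‖ := norm_nonneg x
  have hh2 : (0:ℝ) < h^2 := by positivity
  rw [pi_norm_le_iff_of_nonneg (by positivity)]
  intro p
  rw [Pi.sub_apply, Real.norm_eq_abs, Bfun, Bfun, pertOp, pertOp]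
  split_ifs with hi
  · set j : ℤ := ((p.2:ℕ):ℤ)+1 with hjdef
    set a := lamOfFin N w j with hadef
    have ha : |a| ≤ 1/2 := le_trans (abs_lamOfFin_le ..) hw
    have haw : |a| ≤ ‖w‖ := abs_lamOfFin_le ..
    have e1 := abs_mul_le' (coeff_lip1 ha) (abs_extGrid_le M N x 1 j)
    have e2 := abs_mul_le' (coeff_lip2 ha) (abs_extGrid_le M N x 2 j)
    set X1 := extGrid M N x 1 j
    set X2 := extGrid M N x 2 j
    set X3 := extGrid M N x 1 (j+1)
    set X4 := extGrid M N x 1 (j-1)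
    rw [lamOfFin_zero, ← mul_sub]
    rw [show (2*(1+1/(1+a)) * X1 - 2/(2+a) * X2 - X3 - X4)
        - (2*(1+1/(1+(0:ℝ))) * X1 - 2/(2+(0:ℝ)) * X2 - X3 - X4)
        = (2*(1+1/(1+a)) - 4)*X1 - (2/(2+a) - 1)*X2 by norm_num; ring]
    have hE : |(2*(1+1/(1+a)) - 4)*X1 - (2/(2+a) - 1)*X2| ≤ 5 * (|a| * ‖x‖) := by
      obtain ⟨a1, a2⟩ := abs_le.1 e1
      obtain ⟨b1, b2⟩ := abs_le.1 e2
      rw [abs_le]; constructor <;> linarith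
    rw [abs_mul, abs_of_pos (by positivity : (0:ℝ) < 1/h^2)]
    calc 1/h^2 * |(2*(1+1/(1+a)) - 4)*X1 - (2/(2+a) - 1)*X2|
        ≤ 1/h^2 * (5 * (|a| * ‖x‖)) := mul_le_mul_of_nonneg_left hE (by positivity)
      _ ≤ 1/h^2 * (5 * (‖w‖ * ‖x‖)) := by
          have := mul_le_mul_of_nonneg_right haw hx0
          have h5 : (0:ℝ) ≤ 1/h^2 := by positivity
          nlinarith
      _ = 5/h^2 * (‖w‖ * ‖x‖) := by ring
  · simp only [sub_self, abs_zero]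
    positivity

lemma norm_Bfun_quad_le (hh : 0 < h) {w : Fin (N-1) → ℝ} (hw : ‖w‖ ≤ 1/2)
    (x : Fin (M-1) × Fin (N-1) → ℝ) :
    ‖Bfun M N h w x - Bfun M N h 0 x - Cfun M N h w x‖ ≤ 5/h^2 * (‖w‖^2 * ‖x‖) := by
  have hx0 : (0:ℝ) ≤ ‖x‖ := norm_nonneg x
  have hh2 : (0:ℝ) < h^2 := by positivity
  rw [pi_norm_le_iff_of_nonneg (by positivity)]
  intro p
  rw [Pi.sub_apply, Pi.sub_apply, Real.norm_eq_abs, Bfun, Bfun, pertOp, pertOp, Cfun]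
  split_ifs with hi
  · set j : ℤ := ((p.2:ℕ):ℤ)+1 with hjdef
    have hac : lamOfFin N w j = w p.2 := lamOfFin_coe N w p.2
    set a := lamOfFin N w j with hadef
    have ha : |a| ≤ 1/2 := le_trans (abs_lamOfFin_le ..) hw
    have haw : |a| ≤ ‖w‖ := abs_lamOfFin_le ..
    have ha2 : a^2 ≤ ‖w‖^2 := by
      rw [← sq_abs]
      exact pow_le_pow_left₀ (abs_nonneg a) haw 2
    have e1 := abs_mul_le' (coeff_q1 ha) (abs_extGrid_le M N x 1 j)
    have e2 := abs_mul_le' (coeff_q2 ha) (abs_extGrid_le M N x 2 j)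
    set X1 := extGrid M N x 1 j
    set X2 := extGrid M N x 2 j
    set X3 := extGrid M N x 1 (j+1)
    set X4 := extGrid M N x 1 (j-1)
    rw [lamOfFin_zero, ← hac, ← mul_sub, ← mul_sub]
    rw [show (2*(1+1/(1+a)) * X1 - 2/(2+a) * X2 - X3 - X4)
        - (2*(1+1/(1+(0:ℝ))) * X1 - 2/(2+(0:ℝ)) * X2 - X3 - X4)
        - (-(2*a) * X1 + a/2 * X2)
        = (2*(1+1/(1+a)) - 4 + 2*a)*X1 - (2/(2+a) - 1 + a/2)*X2 by norm_num; ring]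
    have hE : |(2*(1+1/(1+a)) - 4 + 2*a)*X1 - (2/(2+a) - 1 + a/2)*X2| ≤ 5 * (a^2 * ‖x‖) := by
      obtain ⟨a1, a2⟩ := abs_le.1 e1
      obtain ⟨b1, b2⟩ := abs_le.1 e2
      rw [abs_le]; constructor <;> linarith
    rw [abs_mul, abs_of_pos (by positivity : (0:ℝ) < 1/h^2)]
    calc 1/h^2 * |(2*(1+1/(1+a)) - 4 + 2*a)*X1 - (2/(2+a) - 1 + a/2)*X2|
        ≤ 1/h^2 * (5 * (a^2 * ‖x‖)) := mul_le_mul_of_nonneg_left hE (by positivity)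
      _ ≤ 1/h^2 * (5 * (‖w‖^2 * ‖x‖)) := by
          have := mul_le_mul_of_nonneg_right ha2 hx0
          have h5 : (0:ℝ) ≤ 1/h^2 := by positivity
          nlinarith
      _ = 5/h^2 * (‖w‖^2 * ‖x‖) := by ring
  · simp only [sub_self, sub_zero, abs_zero]
    positivity

lemma norm_Cfun_le (hh : 0 < h) (w : Fin (N-1) → ℝ) (x : Fin (M-1) × Fin (N-1) → ℝ) :
    ‖Cfun M N h w x‖ ≤ 3/h^2 * (‖w‖ * ‖x‖) := by
  have hx0 : (0:ℝ) ≤ ‖x‖ := norm_nonneg x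
  have hw0 : (0:ℝ) ≤ ‖w‖ := norm_nonneg w
  have hh2 : (0:ℝ) < h^2 := by positivity
  rw [pi_norm_le_iff_of_nonneg (by positivity)]
  intro p
  rw [Real.norm_eq_abs, Cfun]
  split_ifs with hi
  · set j : ℤ := ((p.2:ℕ):ℤ)+1 with hjdef
    have haw : |w p.2| ≤ ‖w‖ := norm_le_pi_norm w p.2
    have e1 : |-(2 * w p.2) * extGrid M N x 1 j| ≤ 2*‖w‖ * ‖x‖ := by
      refine abs_mul_le' ?_ (abs_extGrid_le M N x 1 j)
      rw [abs_neg, abs_mul, show |(2:ℝ)| = 2 by norm_num]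
      linarith
    have e2 : |w p.2 / 2 * extGrid M N x 2 j| ≤ ‖w‖/2 * ‖x‖ := by
      refine abs_mul_le' ?_ (abs_extGrid_le M N x 2 j)
      rw [abs_div, show |(2:ℝ)| = 2 by norm_num]
      linarith
    have hE : |-(2 * w p.2) * extGrid M N x 1 j + w p.2 / 2 * extGrid M N x 2 j|
        ≤ 3 * (‖w‖ * ‖x‖) := by
      obtain ⟨a1, a2⟩ := abs_le.1 e1
      obtain ⟨b1, b2⟩ := abs_le.1 e2
      rw [abs_le]; constructor <;> nlinarith
    rw [abs_mul, abs_of_pos (by positivity : (0:ℝ) < 1/h^2)]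
    calc 1/h^2 * |-(2 * w p.2) * extGrid M N x 1 j + w p.2 / 2 * extGrid M N x 2 j|
        ≤ 1/h^2 * (3 * (‖w‖ * ‖x‖)) := mul_le_mul_of_nonneg_left hE (by positivity)
      _ = 3/h^2 * (‖w‖ * ‖x‖) := by ring
  · simp only [abs_zero]
    positivity

end Estimates2
section P5

variable {M N : ℕ} {h : ℝ}

noncomputable def B0 (M N : ℕ) (h : ℝ) :
    (Fin (M-1) × Fin (N-1) → ℝ) →L[ℝ] (Fin (M-1) × Fin (N-1) → ℝ) :=
  LinearMap.toContinuousLinearMap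
    { toFun := Bfun M N h 0
      map_add' := Bfun_add M N h 0
      map_smul' := fun c x => by simpa using Bfun_smul M N h 0 c x }

lemma B0_apply (x : Fin (M-1) × Fin (N-1) → ℝ) : B0 M N h x = Bfun M N h 0 x := rfl

lemma continuous_extGrid_x (a b : ℤ) :
    Continuous fun x : Fin (M-1) × Fin (N-1) → ℝ => extGrid M N x a b := by
  unfold extGrid
  by_cases hij : 1 ≤ a ∧ a ≤ (M:ℤ) - 1 ∧ 1 ≤ b ∧ b ≤ (N:ℤ) - 1
  · simp only [dif_pos hij]; exact continuous_apply _
  · simp only [dif_neg hij]; exact continuous_const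

lemma continuousOn_lamOfFin_comp {S : Set ℝ} {w : ℝ → Fin (N-1) → ℝ}
    (hw : ContinuousOn w S) (j : ℤ) :
    ContinuousOn (fun s => lamOfFin N (w s) j) S := by
  unfold lamOfFin
  by_cases hj : 0 ≤ j - 1 ∧ (j - 1).toNat < N - 1
  · simp only [dif_pos hj]; exact (continuous_apply _).comp_continuousOn hw
  · simp only [dif_neg hj]; exact continuousOn_const

lemma continuousOn_Bfun_comp {S : Set ℝ} {w : ℝ → Fin (N-1) → ℝ}
    {x : ℝ → Fin (M-1) × Fin (N-1) → ℝ}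
    (hw : ContinuousOn w S) (hx : ContinuousOn x S) (hwb : ∀ s ∈ S, ‖w s‖ ≤ 1/2) :
    ContinuousOn (fun s => Bfun M N h (w s) (x s)) S := by
  rw [continuousOn_pi]
  intro p
  simp only [Bfun, pertOp, discLap]
  split_ifs with hi
  · set j : ℤ := ((p.2:ℕ):ℤ)+1 with hjdef
    have hL := continuousOn_lamOfFin_comp (N := N) hw j
    have hb : ∀ s ∈ S, |lamOfFin N (w s) j| ≤ 1/2 := fun s hs =>
      le_trans (abs_lamOfFin_le ..) (hwb s hs)
    have h1 : ∀ s ∈ S, 1 + lamOfFin N (w s) j ≠ 0 := by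
      intro s hs hc
      obtain ⟨l, r⟩ := abs_le.1 (hb s hs); linarith
    have h2 : ∀ s ∈ S, 2 + lamOfFin N (w s) j ≠ 0 := by
      intro s hs hc
      obtain ⟨l, r⟩ := abs_le.1 (hb s hs); linarith
    have hE1 := (continuous_extGrid_x (M := M) (N := N) 1 j).comp_continuousOn hx
    have hE2 := (continuous_extGrid_x (M := M) (N := N) 2 j).comp_continuousOn hx
    have hE3 := (continuous_extGrid_x (M := M) (N := N) 1 (j+1)).comp_continuousOn hx
    have hE4 := (continuous_extGrid_x (M := M) (N := N) 1 (j-1)).comp_continuousOn hx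
    exact continuousOn_const.mul
      ((((( continuousOn_const.mul (continuousOn_const.add
          (ContinuousOn.div continuousOn_const (continuousOn_const.add hL) h1))).mul hE1).sub
        ((ContinuousOn.div continuousOn_const (continuousOn_const.add hL) h2).mul hE2)).sub
          hE3).sub hE4)
  · set i : ℤ := ((p.1:ℕ):ℤ)+1
    set j : ℤ := ((p.2:ℕ):ℤ)+1
    have hE0 := (continuous_extGrid_x (M := M) (N := N) i j).comp_continuousOn hx
    have hE1 := (continuous_extGrid_x (M := M) (N := N) (i+1) j).comp_continuousOn hx
    have hE2 := (continuous_extGrid_x (M := M) (N := N) (i-1) j).comp_continuousOn hx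
    have hE3 := (continuous_extGrid_x (M := M) (N := N) i (j+1)).comp_continuousOn hx
    have hE4 := (continuous_extGrid_x (M := M) (N := N) i (j-1)).comp_continuousOn hx
    exact continuousOn_const.mul
      (((((continuousOn_const.mul hE0).sub hE1).sub hE2).sub hE3).sub hE4)

lemma continuousOn_Cfun_comp {S : Set ℝ} {w : ℝ → Fin (N-1) → ℝ}
    {x : ℝ → Fin (M-1) × Fin (N-1) → ℝ}
    (hw : ContinuousOn w S) (hx : ContinuousOn x S) :
    ContinuousOn (fun s => Cfun M N h (w s) (x s)) S := by
  rw [continuousOn_pi]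
  intro p
  simp only [Cfun]
  split_ifs with hi
  · set j : ℤ := ((p.2:ℕ):ℤ)+1 with hjdef
    have hwp := (continuous_apply p.2).comp_continuousOn hw
    have hE1 := (continuous_extGrid_x (M := M) (N := N) 1 j).comp_continuousOn hx
    have hE2 := (continuous_extGrid_x (M := M) (N := N) 2 j).comp_continuousOn hx
    exact continuousOn_const.mul
      (((continuousOn_const.mul hwp).neg.mul hE1).add ((hwp.div_const 2).mul hE2))
  · exact continuousOn_const

end P5

set_option maxHeartbeats 1000000

/-- the map `Λ_h : λ ↦ u_λ(T)` from the open ball of radius `1/2` of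
`C([0,T], ℝ^{N−1})` (supremum norm) to the finite-dimensional space of interior grid
values is Fréchet differentiable at `0`, where `u_λ` is the solution of the perturbed
semi-discrete heat equation `∂_t u_λ + A(λ(t)) u_λ = F`, `u_λ(0) = u₀`. -/
theorem stmt11 (M N : ℕ) (hM : 3 ≤ M) (hN : 3 ≤ N) (h : ℝ) (hh : 0 < h)
    (T : ℝ) (hT : 0 < T)
    (F : ℝ → ℤ → ℤ → ℝ)
    (hF : ∀ i j, isInterior M N i j → ContinuousOn (fun t => F t i j) (Icc (0 : ℝ) T))
    (u₀ : ℤ → ℤ → ℝ) (hu₀ : ∀ i j, onBoundary M N i j → u₀ i j = 0)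
    (u : C(Icc (0 : ℝ) T, Fin (N - 1) → ℝ) → ℝ → ℤ → ℤ → ℝ)
    (hu : ∀ lam : C(Icc (0 : ℝ) T, Fin (N - 1) → ℝ), ‖lam‖ < 1 / 2 →
      (∀ t ∈ Icc (0 : ℝ) T, ∀ i j, onBoundary M N i j → u lam t i j = 0) ∧
      (∀ t, ∀ ht : t ∈ Icc (0 : ℝ) T, ∀ i j, isInterior M N i j →
        HasDerivWithinAt (fun s => u lam s i j)
          (F t i j - pertOp h (lamOfFin N (lam ⟨t, ht⟩)) (u lam t) i j)
          (Icc (0 : ℝ) T) t) ∧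
      u lam 0 = u₀) :
    DifferentiableAt ℝ
      (fun lam : C(Icc (0 : ℝ) T, Fin (N - 1) → ℝ) =>
        fun p : Fin (M - 1) × Fin (N - 1) =>
          u lam T (((p.1 : ℕ) : ℤ) + 1) (((p.2 : ℕ) : ℤ) + 1)) 0 := by
  classical
  have hT' : (0:ℝ) ≤ T := hT.le
  have h0mem : (0:ℝ) ∈ Icc (0:ℝ) T := ⟨le_refl 0, hT'⟩
  have hTmem : T ∈ Icc (0:ℝ) T := ⟨hT', le_refl T⟩
  have hh2 : (0:ℝ) < h^2 := by positivity
  set Xv : C(Icc (0:ℝ) T, Fin (N-1) → ℝ) → ℝ → (Fin (M-1) × Fin (N-1) → ℝ) :=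
    fun lam t p => u lam t (((p.1:ℕ):ℤ)+1) (((p.2:ℕ):ℤ)+1) with hXv
  set fv : ℝ → (Fin (M-1) × Fin (N-1) → ℝ) :=
    fun t p => F t (((p.1:ℕ):ℤ)+1) (((p.2:ℕ):ℤ)+1) with hfv
  set ev : C(Icc (0:ℝ) T, Fin (N-1) → ℝ) → ℝ → (Fin (N-1) → ℝ) :=
    fun lam s => lam (projIcc 0 T hT' s) with hev
  have hev_norm : ∀ lam s, ‖ev lam s‖ ≤ ‖lam‖ := fun lam s =>
    ContinuousMap.norm_coe_le_norm lam _
  have hev_cont : ∀ lam, Continuous (ev lam) := fun lam =>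
    lam.continuous.comp continuous_projIcc
  have hev0 : ∀ s, ev (0 : C(Icc (0:ℝ) T, Fin (N-1) → ℝ)) s = 0 := fun s => rfl
  have hzero2 : ‖(0 : C(Icc (0:ℝ) T, Fin (N-1) → ℝ))‖ < 1/2 := by
    rw [norm_zero]; norm_num
  -- vector form of the ODE
  have hODE : ∀ lam, ‖lam‖ < 1/2 → ∀ t ∈ Icc (0:ℝ) T,
      HasDerivWithinAt (Xv lam) (fv t - Bfun M N h (ev lam t) (Xv lam t))
        (Icc (0:ℝ) T) t := by
    intro lam hlam t ht
    rw [hasDerivWithinAt_pi]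
    intro p
    have h1 := p.1.isLt
    have h2 := p.2.isLt
    have hint : isInterior M N (((p.1:ℕ):ℤ)+1) (((p.2:ℕ):ℤ)+1) := by
      refine ⟨by omega, by omega, by omega, by omega⟩
    have hder := (hu lam hlam).2.1 t ht _ _ hint
    have hbd : ∀ i j, onBoundary M N i j → u lam t i j = 0 := (hu lam hlam).1 t ht
    have hkey : Bfun M N h (ev lam t) (Xv lam t) p
        = pertOp h (lamOfFin N (lam ⟨t, ht⟩)) (u lam t) (((p.1:ℕ):ℤ)+1) (((p.2:ℕ):ℤ)+1) := by
      have : ev lam t = lam ⟨t, ht⟩ := by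
        simp only [hev, projIcc_of_mem hT' ht]
      rw [this]
      exact (pertOp_eq_Bfun M N hM hN h _ (u lam t) hbd p).symm
    have : (fv t - Bfun M N h (ev lam t) (Xv lam t)) p
        = F t (((p.1:ℕ):ℤ)+1) (((p.2:ℕ):ℤ)+1)
          - pertOp h (lamOfFin N (lam ⟨t, ht⟩)) (u lam t) (((p.1:ℕ):ℤ)+1) (((p.2:ℕ):ℤ)+1) := by
      rw [Pi.sub_apply, hkey]
    rw [this]
    exact hder
  have hcont : ∀ lam, ‖lam‖ < 1/2 → ContinuousOn (Xv lam) (Icc (0:ℝ) T) :=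
    fun lam hlam t ht => ((hODE lam hlam t ht).continuousWithinAt)
  have hinit : ∀ lam, ‖lam‖ < 1/2 →
      Xv lam 0 = fun p => u₀ (((p.1:ℕ):ℤ)+1) (((p.2:ℕ):ℤ)+1) := by
    intro lam hlam
    funext p
    simp only [hXv, (hu lam hlam).2.2]
  obtain ⟨M₀, hM₀⟩ := isCompact_Icc.exists_bound_of_continuousOn (hcont 0 hzero2)
  have hM₀0 : 0 ≤ M₀ := le_trans (norm_nonneg _) (hM₀ 0 h0mem)
  set K : ℝ := 12/h^2 with hK
  have hKpos : 0 < K := by rw [hK]; positivity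
  set G : ℝ := Real.exp (K*T)/K with hG
  have hGpos : 0 < G := by rw [hG]; positivity
  set C₁ : ℝ := 5/h^2 * M₀ * G with hC₁
  have hC₁0 : 0 ≤ C₁ := by rw [hC₁]; positivity
  -- Gronwall estimate on the difference
  have hdiff : ∀ lam, ‖lam‖ < 1/2 → ∀ t ∈ Icc (0:ℝ) T,
      ‖Xv lam t - Xv 0 t‖ ≤ C₁ * ‖lam‖ := by
    intro lam hlam t ht
    set ε : ℝ := 5/h^2 * (‖lam‖ * M₀) with hε
    have hε0 : 0 ≤ ε := by rw [hε]; positivity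
    have hwb : ∀ s, ‖ev lam s‖ ≤ 1/2 := fun s => le_trans (hev_norm lam s) hlam.le
    have key := norm_le_gronwallBound_of_norm_deriv_right_le
      (f := fun t => Xv lam t - Xv 0 t)
      (f' := fun t => (fv t - Bfun M N h (ev lam t) (Xv lam t))
          - (fv t - Bfun M N h (ev 0 t) (Xv 0 t)))
      (δ := 0) (K := K) (ε := ε) (a := 0) (b := T)
      ((hcont lam hlam).sub (hcont 0 hzero2))
      (fun x hx => (((hODE lam hlam x (Ico_subset_Icc_self hx)).sub
          (hODE 0 hzero2 x (Ico_subset_Icc_self hx))).mono_of_mem_nhdsWithin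
          (Icc_mem_nhdsGE_of_mem hx)))
      (by show ‖Xv lam 0 - Xv 0 0‖ ≤ 0
          rw [hinit lam hlam, hinit 0 hzero2, sub_self, norm_zero])
      ?_ t ht
    · calc ‖Xv lam t - Xv 0 t‖ ≤ gronwallBound 0 K ε (t - 0) := key
        _ = 0 * Real.exp (K*(t-0)) + ε/K * (Real.exp (K*(t-0)) - 1) := by
            rw [gronwallBound_of_K_ne_0 (ne_of_gt hKpos)]
        _ ≤ ε/K * Real.exp (K*T) := by
            have h1 : Real.exp (K*(t-0)) ≤ Real.exp (K*T) := by
              rw [Real.exp_le_exp]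
              have := ht.2
              nlinarith
            have h2 : 0 ≤ ε/K := by positivity
            nlinarith [Real.exp_pos (K*(t-0))]
        _ = C₁ * ‖lam‖ := by rw [hε, hC₁, hG]; ring
    · intro x hx
      have hxmem : x ∈ Icc (0:ℝ) T := Ico_subset_Icc_self hx
      show ‖fv x - Bfun M N h (ev lam x) (Xv lam x)
          - (fv x - Bfun M N h (ev 0 x) (Xv 0 x))‖ ≤ K * ‖Xv lam x - Xv 0 x‖ + ε
      have e : (fv x - Bfun M N h (ev lam x) (Xv lam x))
          - (fv x - Bfun M N h (ev 0 x) (Xv 0 x))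
          = -(Bfun M N h (ev lam x) (Xv lam x) - Bfun M N h (ev lam x) (Xv 0 x))
            - (Bfun M N h (ev lam x) (Xv 0 x) - Bfun M N h 0 (Xv 0 x)) := by
        rw [hev0]
        abel
      rw [e]
      have b1 : ‖Bfun M N h (ev lam x) (Xv lam x) - Bfun M N h (ev lam x) (Xv 0 x)‖
          ≤ K * ‖Xv lam x - Xv 0 x‖ := by
        rw [← Bfun_sub, hK]
        exact norm_Bfun_le hh (hwb x) _
      have b2 : ‖Bfun M N h (ev lam x) (Xv 0 x) - Bfun M N h 0 (Xv 0 x)‖ ≤ ε := by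
        refine le_trans (norm_Bfun_diff_le hh (hwb x) _) ?_
        rw [hε]
        have := mul_le_mul (hev_norm lam x) (hM₀ x hxmem) (norm_nonneg _) (norm_nonneg lam)
        have h5 : (0:ℝ) ≤ 5/h^2 := by positivity
        nlinarith
      calc ‖-(Bfun M N h (ev lam x) (Xv lam x) - Bfun M N h (ev lam x) (Xv 0 x))
          - (Bfun M N h (ev lam x) (Xv 0 x) - Bfun M N h 0 (Xv 0 x))‖
          ≤ ‖-(Bfun M N h (ev lam x) (Xv lam x) - Bfun M N h (ev lam x) (Xv 0 x))‖
            + ‖Bfun M N h (ev lam x) (Xv 0 x) - Bfun M N h 0 (Xv 0 x)‖ := norm_sub_le _ _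
        _ ≤ K * ‖Xv lam x - Xv 0 x‖ + ε := by
            rw [norm_neg]
            exact add_le_add b1 b2
  -- exponential machinery
  let +nondep : NormedAlgebra ℚ ((Fin (M-1) × Fin (N-1) → ℝ) →L[ℝ] (Fin (M-1) × Fin (N-1) → ℝ)) :=
    .restrictScalars ℚ ℝ _
  set g : ℝ → ((Fin (M-1) × Fin (N-1) → ℝ) →L[ℝ] (Fin (M-1) × Fin (N-1) → ℝ)) :=
    fun s => NormedSpace.exp (s • B0 M N h) with hg
  have hgcont : Continuous g := by
    rw [hg]
    exact NormedSpace.exp_continuous.comp (continuous_id.smul continuous_const)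
  obtain ⟨CE, hCE⟩ := (isCompact_Icc (a := -T) (b := T)).exists_bound_of_continuousOn
    hgcont.continuousOn
  have hCE0 : 0 ≤ CE := le_trans (norm_nonneg _) (hCE 0 ⟨by linarith, hT'⟩)
  have hgTn : ‖g (-T)‖ ≤ CE := hCE (-T) ⟨le_refl _, by linarith⟩
  have hCEmem : ∀ s ∈ Ι (0:ℝ) T, ‖g s‖ ≤ CE := by
    intro s hs
    rw [uIoc_of_le hT'] at hs
    exact hCE s ⟨by linarith [hs.1], hs.2⟩
  -- the integrand of the candidate derivative
  set Φ : C(Icc (0:ℝ) T, Fin (N-1) → ℝ) → ℝ → (Fin (M-1) × Fin (N-1) → ℝ) :=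
    fun lam s => (g s) (Cfun M N h (ev lam s) (Xv 0 s)) with hΦ
  have hΦcont : ∀ lam, ContinuousOn (Φ lam) (Icc (0:ℝ) T) := by
    intro lam
    exact hgcont.continuousOn.clm_apply
      (continuousOn_Cfun_comp ((hev_cont lam).continuousOn) (hcont 0 hzero2))
  have hΦint : ∀ lam, IntervalIntegrable (Φ lam) MeasureTheory.volume 0 T := fun lam =>
    ContinuousOn.intervalIntegrable (by rw [uIcc_of_le hT']; exact hΦcont lam)
  -- the candidate derivative as a linear map
  set Llin : C(Icc (0:ℝ) T, Fin (N-1) → ℝ) →ₗ[ℝ] (Fin (M-1) × Fin (N-1) → ℝ) :=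
    { toFun := fun lam => (g (-T)) (-∫ s in (0:ℝ)..T, Φ lam s)
      map_add' := by
        intro lam1 lam2
        have h1 : ∀ s, Φ (lam1 + lam2) s = Φ lam1 s + Φ lam2 s := by
          intro s
          simp only [hΦ]
          rw [← map_add]
          congr 1
          have : ev (lam1 + lam2) s = ev lam1 s + ev lam2 s := rfl
          rw [this, Cfun_add_w]
        have h2 : (∫ s in (0:ℝ)..T, Φ (lam1 + lam2) s)
            = (∫ s in (0:ℝ)..T, Φ lam1 s) + ∫ s in (0:ℝ)..T, Φ lam2 s := by
          rw [← intervalIntegral.integral_add (hΦint lam1) (hΦint lam2)]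
          congr 1
          funext s
          rw [h1 s]
        simp only [h2, neg_add, map_add]
      map_smul' := by
        intro c lam
        have h1 : ∀ s, Φ (c • lam) s = c • Φ lam s := by
          intro s
          simp only [hΦ]
          rw [← map_smul]
          congr 1
          have : ev (c • lam) s = c • ev lam s := rfl
          rw [this, Cfun_smul_w]
        have h2 : (∫ s in (0:ℝ)..T, Φ (c • lam) s)
            = c • ∫ s in (0:ℝ)..T, Φ lam s := by
          rw [← intervalIntegral.integral_smul]
          congr 1
          funext s
          rw [h1 s]
        simp only [h2, ← smul_neg, map_smul]
        rfl } with hLlin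
  have hΦbound : ∀ lam, ∀ s ∈ Ι (0:ℝ) T, ‖Φ lam s‖ ≤ CE * (3/h^2 * (‖lam‖ * M₀)) := by
    intro lam s hs
    have hsmem : s ∈ Icc (0:ℝ) T := by
      rw [uIoc_of_le hT'] at hs
      exact ⟨hs.1.le, hs.2⟩
    refine le_trans (ContinuousLinearMap.le_opNorm _ _) ?_
    refine mul_le_mul (hCEmem s hs) ?_ (norm_nonneg _) hCE0
    refine le_trans (norm_Cfun_le hh _ _) ?_
    have := mul_le_mul (hev_norm lam s) (hM₀ s hsmem) (norm_nonneg _) (norm_nonneg lam)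
    have h5 : (0:ℝ) ≤ 3/h^2 := by positivity
    nlinarith
  have hLbound : ∀ lam, ‖Llin lam‖ ≤ (CE * (CE * (3/h^2 * M₀) * T)) * ‖lam‖ := by
    intro lam
    have hIb : ‖∫ s in (0:ℝ)..T, Φ lam s‖ ≤ CE * (3/h^2 * (‖lam‖ * M₀)) * |T - 0| :=
      intervalIntegral.norm_integral_le_of_norm_le_const (hΦbound lam)
    rw [abs_of_nonneg (by linarith : (0:ℝ) ≤ T - 0)] at hIb
    calc ‖Llin lam‖ ≤ ‖g (-T)‖ * ‖-∫ s in (0:ℝ)..T, Φ lam s‖ :=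
          ContinuousLinearMap.le_opNorm _ _
      _ = ‖g (-T)‖ * ‖∫ s in (0:ℝ)..T, Φ lam s‖ := by rw [norm_neg]
      _ ≤ CE * (CE * (3/h^2 * (‖lam‖ * M₀)) * (T - 0)) := by
          exact mul_le_mul hgTn hIb (norm_nonneg _) hCE0
      _ = (CE * (CE * (3/h^2 * M₀) * T)) * ‖lam‖ := by ring
  set Lmap : C(Icc (0:ℝ) T, Fin (N-1) → ℝ) →L[ℝ] (Fin (M-1) × Fin (N-1) → ℝ) :=
    Llin.mkContinuousOfExistsBound ⟨_, hLbound⟩ with hLmap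
  -- constants for the remainder
  set Cpt : ℝ := 5/h^2 * (M₀ + C₁) + 3/h^2 * C₁ with hCpt
  have hCpt0 : 0 ≤ Cpt := by rw [hCpt]; positivity
  set Crem : ℝ := CE * (CE * Cpt * T) with hCrem
  have hCrem0 : 0 ≤ Crem := by rw [hCrem]; positivity
  -- main remainder estimate
  have hrem : ∀ lam : C(Icc (0:ℝ) T, Fin (N-1) → ℝ), ‖lam‖ < 1/2 →
      ‖Xv lam T - Xv 0 T - Llin lam‖ ≤ Crem * ‖lam‖^2 := by
    intro lam hlam
    have hwb : ∀ s, ‖ev lam s‖ ≤ 1/2 := fun s => le_trans (hev_norm lam s) hlam.le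
    set z : ℝ → (Fin (M-1) × Fin (N-1) → ℝ) :=
      fun t => (g t) (Xv lam t - Xv 0 t) with hz
    set zd : ℝ → (Fin (M-1) × Fin (N-1) → ℝ) :=
      fun t => (g t) (Bfun M N h 0 (Xv lam t) - Bfun M N h (ev lam t) (Xv lam t)) with hzd
    have hz' : ∀ t ∈ Ioo (0:ℝ) T, HasDerivAt z (zd t) t := by
      intro t ht
      have hgd : HasDerivAt g (g t * B0 M N h) t := by
        rw [hg]
        exact hasDerivAt_exp_smul_const (B0 M N h) t
      have htI : t ∈ Icc (0:ℝ) T := Ioo_subset_Icc_self ht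
      have hdd : HasDerivAt (fun t => Xv lam t - Xv 0 t)
          ((fv t - Bfun M N h (ev lam t) (Xv lam t))
            - (fv t - Bfun M N h (ev 0 t) (Xv 0 t))) t :=
        (((hODE lam hlam t htI).sub (hODE 0 hzero2 t htI)).hasDerivAt
          (Icc_mem_nhds ht.1 ht.2))
      have := hgd.clm_apply hdd
      convert this using 1 <;> try rfl
      rw [hzd, ContinuousLinearMap.mul_apply, ← map_add]
      congr 1
      rw [hev0, B0_apply, Bfun_sub]
      abel
    have hzc : ContinuousOn z (Icc (0:ℝ) T) :=
      hgcont.continuousOn.clm_apply ((hcont lam hlam).sub (hcont 0 hzero2))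
    have hzdc : ContinuousOn zd (Icc (0:ℝ) T) := by
      refine hgcont.continuousOn.clm_apply (ContinuousOn.sub ?_ ?_)
      · exact continuousOn_Bfun_comp continuousOn_const (hcont lam hlam)
          (fun s _ => by rw [norm_zero]; norm_num)
      · exact continuousOn_Bfun_comp ((hev_cont lam).continuousOn) (hcont lam hlam)
          (fun s _ => hwb s)
    have hzdint : IntervalIntegrable zd MeasureTheory.volume 0 T :=
      ContinuousOn.intervalIntegrable (by rw [uIcc_of_le hT']; exact hzdc)
    have hftc : ∫ s in (0:ℝ)..T, zd s = z T - z 0 :=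
      intervalIntegral.integral_eq_sub_of_hasDeriv_right_of_le hT' hzc
        (fun t ht => (hz' t ht).hasDerivWithinAt) hzdint
    have hz0 : z 0 = 0 := by
      show (g 0) (Xv lam 0 - Xv 0 0) = 0
      rw [hinit lam hlam, hinit 0 hzero2, sub_self, map_zero]
    have hginv : g (-T) * g T = 1 := by
      rw [hg]
      simp only
      rw [← NormedSpace.exp_add_of_commute (((Commute.refl (B0 M N h)).smul_left (-T)).smul_right T)]
      rw [show (-T) • B0 M N h + T • B0 M N h = 0 by rw [← add_smul]; simp]
      exact NormedSpace.exp_zero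
    have hdT : Xv lam T - Xv 0 T = (g (-T)) (∫ s in (0:ℝ)..T, zd s) := by
      rw [hftc, hz0, sub_zero]
      show Xv lam T - Xv 0 T = (g (-T)) ((g T) (Xv lam T - Xv 0 T))
      rw [← ContinuousLinearMap.comp_apply, ← ContinuousLinearMap.mul_def, hginv,
        ContinuousLinearMap.one_apply]
    have hrem_eq : Xv lam T - Xv 0 T - Llin lam
        = (g (-T)) (∫ s in (0:ℝ)..T, (zd s + Φ lam s)) := by
      rw [hdT]
      have hLl : Llin lam = (g (-T)) (-∫ s in (0:ℝ)..T, Φ lam s) := rfl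
      rw [hLl, ← map_sub, sub_neg_eq_add,
        ← intervalIntegral.integral_add hzdint (hΦint lam)]
    have hpt : ∀ s ∈ Ι (0:ℝ) T, ‖zd s + Φ lam s‖ ≤ CE * Cpt * ‖lam‖^2 := by
      intro s hs
      have hsmem : s ∈ Icc (0:ℝ) T := by
        rw [uIoc_of_le hT'] at hs
        exact ⟨hs.1.le, hs.2⟩
      have hVeq : zd s + Φ lam s = (g s)
          (-((Bfun M N h (ev lam s) (Xv lam s) - Bfun M N h 0 (Xv lam s)
              - Cfun M N h (ev lam s) (Xv lam s))
            + Cfun M N h (ev lam s) (Xv lam s - Xv 0 s))) := by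
        rw [hzd, hΦ, ← map_add]
        congr 1
        rw [Cfun_sub]
        abel
      rw [hVeq]
      refine le_trans (ContinuousLinearMap.le_opNorm _ _) ?_
      refine le_trans (mul_le_mul (hCEmem s hs) le_rfl (norm_nonneg _) hCE0) ?_
      rw [norm_neg]
      have hq := norm_Bfun_quad_le hh (hwb s) (Xv lam s)
      have hV : ‖Bfun M N h (ev lam s) (Xv lam s) - Bfun M N h 0 (Xv lam s)
          - Cfun M N h (ev lam s) (Xv lam s)
          + Cfun M N h (ev lam s) (Xv lam s - Xv 0 s)‖ ≤ Cpt * ‖lam‖^2 := by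
        have hc := norm_Cfun_le hh (ev lam s) (Xv lam s - Xv 0 s)
        have hd := hdiff lam hlam s hsmem
        have hx : ‖Xv lam s‖ ≤ M₀ + C₁ * ‖lam‖ := by
          calc ‖Xv lam s‖ = ‖Xv 0 s + (Xv lam s - Xv 0 s)‖ := by congr 1; abel
            _ ≤ ‖Xv 0 s‖ + ‖Xv lam s - Xv 0 s‖ := norm_add_le _ _
            _ ≤ M₀ + C₁ * ‖lam‖ := add_le_add (hM₀ s hsmem) hd
        have hl1 : ‖lam‖ ≤ 1 := by linarith [hlam]
        have hnl0 : (0:ℝ) ≤ ‖lam‖ := norm_nonneg lam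
        have hw1 : ‖ev lam s‖ ≤ ‖lam‖ := hev_norm lam s
        have hw2 : ‖ev lam s‖^2 ≤ ‖lam‖^2 := pow_le_pow_left₀ (norm_nonneg _) hw1 2
        have hx' : ‖Xv lam s‖ ≤ M₀ + C₁ := by nlinarith
        have p1 : ‖ev lam s‖^2 * ‖Xv lam s‖ ≤ ‖lam‖^2 * (M₀ + C₁) :=
          mul_le_mul hw2 hx' (norm_nonneg _) (by positivity)
        have p2 : ‖ev lam s‖ * ‖Xv lam s - Xv 0 s‖ ≤ ‖lam‖ * (C₁ * ‖lam‖) :=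
          mul_le_mul hw1 hd (norm_nonneg _) hnl0
        calc ‖Bfun M N h (ev lam s) (Xv lam s) - Bfun M N h 0 (Xv lam s)
              - Cfun M N h (ev lam s) (Xv lam s)
              + Cfun M N h (ev lam s) (Xv lam s - Xv 0 s)‖
            ≤ ‖Bfun M N h (ev lam s) (Xv lam s) - Bfun M N h 0 (Xv lam s)
                - Cfun M N h (ev lam s) (Xv lam s)‖
              + ‖Cfun M N h (ev lam s) (Xv lam s - Xv 0 s)‖ := norm_add_le _ _
          _ ≤ 5/h^2 * (‖ev lam s‖^2 * ‖Xv lam s‖)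
              + 3/h^2 * (‖ev lam s‖ * ‖Xv lam s - Xv 0 s‖) := add_le_add hq hc
          _ ≤ 5/h^2 * (‖lam‖^2 * (M₀ + C₁)) + 3/h^2 * (‖lam‖ * (C₁ * ‖lam‖)) := by
              have h5 : (0:ℝ) ≤ 5/h^2 := by positivity
              have h3 : (0:ℝ) ≤ 3/h^2 := by positivity
              exact add_le_add (mul_le_mul_of_nonneg_left p1 h5)
                (mul_le_mul_of_nonneg_left p2 h3)
          _ = Cpt * ‖lam‖^2 := by rw [hCpt]; ring
      calc CE * ‖Bfun M N h (ev lam s) (Xv lam s) - Bfun M N h 0 (Xv lam s)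
            - Cfun M N h (ev lam s) (Xv lam s)
            + Cfun M N h (ev lam s) (Xv lam s - Xv 0 s)‖
          ≤ CE * (Cpt * ‖lam‖^2) := mul_le_mul_of_nonneg_left hV hCE0
        _ = CE * Cpt * ‖lam‖^2 := by ring
    have hIb : ‖∫ s in (0:ℝ)..T, (zd s + Φ lam s)‖ ≤ CE * Cpt * ‖lam‖^2 * |T - 0| :=
      intervalIntegral.norm_integral_le_of_norm_le_const hpt
    rw [abs_of_nonneg (by linarith : (0:ℝ) ≤ T - 0)] at hIb
    calc ‖Xv lam T - Xv 0 T - Llin lam‖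
        = ‖(g (-T)) (∫ s in (0:ℝ)..T, (zd s + Φ lam s))‖ := by rw [hrem_eq]
      _ ≤ ‖g (-T)‖ * ‖∫ s in (0:ℝ)..T, (zd s + Φ lam s)‖ :=
          ContinuousLinearMap.le_opNorm _ _
      _ ≤ CE * (CE * Cpt * ‖lam‖^2 * (T - 0)) :=
          mul_le_mul hgTn hIb (norm_nonneg _) hCE0
      _ = Crem * ‖lam‖^2 := by rw [hCrem]; ring
  -- conclusion
  have hfd : HasFDerivAt (fun lam => Xv lam T) Lmap 0 := by
    rw [hasFDerivAt_iff_isLittleO_nhds_zero]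
    rw [Asymptotics.isLittleO_iff]
    intro c hc
    rw [Metric.eventually_nhds_iff]
    refine ⟨min (1/2) (c / (Crem + 1)), by positivity, ?_⟩
    intro lam hlamd
    rw [dist_zero_right] at hlamd
    have hl2 : ‖lam‖ < 1/2 := lt_of_lt_of_le hlamd (min_le_left _ _)
    have hlc : ‖lam‖ ≤ c/(Crem+1) := le_of_lt (lt_of_lt_of_le hlamd (min_le_right _ _))
    have hlc' : ‖lam‖ * (Crem + 1) ≤ c := by
      rw [← le_div_iff₀ (by positivity : (0:ℝ) < Crem + 1)]
      exact hlc
    rw [zero_add]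
    have hLl : Lmap lam = Llin lam := by
      rw [hLmap]
      exact LinearMap.mkContinuousOfExistsBound_apply _ _ lam
    have e1 : ‖lam‖ * (‖lam‖ * (Crem + 1)) ≤ ‖lam‖ * c :=
      mul_le_mul_of_nonneg_left hlc' (norm_nonneg lam)
    have e2 : Crem * ‖lam‖^2 + ‖lam‖^2 = ‖lam‖ * (‖lam‖ * (Crem + 1)) := by ring
    calc ‖Xv lam T - Xv 0 T - Lmap lam‖
        = ‖Xv lam T - Xv 0 T - Llin lam‖ := by rw [hLl]
      _ ≤ Crem * ‖lam‖^2 := hrem lam hl2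
      _ ≤ c * ‖lam‖ := by linarith only [e1, e2, sq_nonneg (‖lam‖)]
  exact hfd.differentiableAt
end
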